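/- Let (V, 𝒮) be a simplicial fan supported on ℝⁿ_{≥0}, let E ∈ 𝒮, and let F ∈ lk(E) be a maximal non-U-pyramid (F ∪ E is interior, F is not a U-pyramid, and every F′ ∈ lk(E) with F ⊊ F′ is a U-pyramid). Suppose 𝒜_F = {A₁,…,A_r} with V_{A_i} = {2i−1, 2i} and (A_i)_{2i−1} = (A_i)_{2i} = 1 for 1 ≤ i ≤ r. Let S ⊆ {1,…,r} be nonempty, and let G ∈ lk(F ∪ E) be such that for every j ∈ S both 2j−1 ∈ σ(G) and 2j ∈ σ(G). For each j ∈ {1,…,r} ∖ S choose a linear functional u_j : ℝⁿ → ℝ with u_j(A_j) = 1 and u_j(w) = 0 for every w ∈ (F ∪ E) ∖ {A_j}, and set y_j := −Σ_{v ∈ W(F∪E)} u_j(v) · x_v, viewed in the ring H(F ∪ E). Then the element (Π_{v∈G} x_v) · Π_{j ∈ {1,…,r}∖S} y_j equals 0 in H(F ∪ E). -/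

import Mathlib

open scoped Classical

noncomputable section

/-- The conical hull (set of nonnegative linear combinations) of a finite set of
vectors in `ℝⁿ`. -/
def coneOf {n : ℕ} (F : Finset (Fin n → ℝ)) : Set (Fin n → ℝ) :=
  {x | ∃ lam : (Fin n → ℝ) → ℝ, (∀ v ∈ F, 0 ≤ lam v) ∧ x = ∑ v ∈ F, lam v • v}

/-- A simplicial fan supported on `ℝⁿ_{≥0}`, encoding a geometric triangulation of
the `(n-1)`-dimensional simplex: a finite vertex set `V ⊆ ℝⁿ_{≥0} ∖ {0}` together
with a downward-closed collection of linearly independent finite subsets of `V`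
(the faces, including `∅`) whose cones cover the nonnegative orthant and intersect
along common faces. -/
structure SimplicialFan (n : ℕ) where
  verts : Finset (Fin n → ℝ)
  faces : Finset (Finset (Fin n → ℝ))
  verts_nonneg : ∀ v ∈ verts, ∀ i, 0 ≤ v i
  verts_ne_zero : ∀ v ∈ verts, v ≠ 0
  faces_subset_verts : ∀ F ∈ faces, F ⊆ verts
  empty_mem : ∅ ∈ faces
  indep : ∀ F ∈ faces, LinearIndependent ℝ (fun v : {x // x ∈ F} => (v : Fin n → ℝ))
  down_closed : ∀ F ∈ faces, ∀ F' ⊆ F, F' ∈ faces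
  covers : (⋃ F ∈ faces, coneOf F) = {x : Fin n → ℝ | ∀ i, 0 ≤ x i}
  inter_cone : ∀ F ∈ faces, ∀ F' ∈ faces, coneOf F ∩ coneOf F' = coneOf (F ∩ F')

/-- `σ(F)`: the set of coordinates `ℓ` such that some `v ∈ F` has `v_ℓ ≠ 0`. -/
def suppSet {n : ℕ} (F : Finset (Fin n → ℝ)) : Finset (Fin n) :=
  Finset.univ.filter fun ℓ => ∃ v ∈ F, v ℓ ≠ 0

/-- A face is interior if its support is all of `{1,…,n}`. -/
def IsInteriorFace {n : ℕ} (F : Finset (Fin n → ℝ)) : Prop :=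
  suppSet F = Finset.univ

/-- The excess `e(F) = |σ(F)| − |F|`. -/
def excess {n : ℕ} (F : Finset (Fin n → ℝ)) : ℕ :=
  (suppSet F).card - F.card

/-- The link of a face `E`: faces `F` with `F ∩ E = ∅` and `F ∪ E ∈ 𝒮`. -/
def link {n : ℕ} (S : SimplicialFan n) (E : Finset (Fin n → ℝ)) :
    Finset (Finset (Fin n → ℝ)) :=
  S.faces.filter fun F => F ∩ E = ∅ ∧ F ∪ E ∈ S.faces

/-- `F ∈ lk(E)` is a pyramid with apex `A ∈ F` if `F ∪ E` is interior but
`(F ∪ E) ∖ {A}` is not. -/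
def IsPyramidApex {n : ℕ} (E F : Finset (Fin n → ℝ)) (A : Fin n → ℝ) : Prop :=
  A ∈ F ∧ IsInteriorFace (F ∪ E) ∧ ¬ IsInteriorFace ((F ∪ E).erase A)

/-- `𝒜_F`: the set of apices of `F` (relative to `E`). -/
def apices {n : ℕ} (E F : Finset (Fin n → ℝ)) : Finset (Fin n → ℝ) :=
  F.filter fun A => IsPyramidApex E F A

/-- `V_A = {1,…,n} ∖ σ((F ∪ E) ∖ {A})`. -/
def baseDirs {n : ℕ} (E F : Finset (Fin n → ℝ)) (A : Fin n → ℝ) : Finset (Fin n) :=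
  Finset.univ \ suppSet ((F ∪ E).erase A)

/-- `F` is a U-pyramid if `|V_A| = 1` for some apex `A` of `F`. -/
def IsUPyramid {n : ℕ} (E F : Finset (Fin n → ℝ)) : Prop :=
  ∃ A ∈ apices E F, (baseDirs E F A).card = 1

/-- A full partition of `F ∈ lk(E)`: a decomposition `F = F₁ ⊔ F₂ ⊔ 𝒜_F` with
`F₁ ∪ 𝒜_F ∪ E` interior and `σ(F₂ ∪ E) = {1,…,n} ∖ ⋃_{A ∈ 𝒜_F} V_A`. -/
def IsFullPartition {n : ℕ} (E F F₁ F₂ : Finset (Fin n → ℝ)) : Prop :=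
  F = F₁ ∪ F₂ ∪ apices E F ∧
  Disjoint F₁ F₂ ∧ Disjoint F₁ (apices E F) ∧ Disjoint F₂ (apices E F) ∧
  IsInteriorFace (F₁ ∪ apices E F ∪ E) ∧
  suppSet (F₂ ∪ E) = Finset.univ \ (apices E F).biUnion (baseDirs E F)

/-- The local `h`-polynomial
`ℓ(𝒮, E; t) = Σ_{F ∈ 𝒮, E ⊆ F} (−1)^{n−|F|} t^{(n−|E|)−e(F)} (t−1)^{e(F)}`. -/
def localH {n : ℕ} (S : SimplicialFan n) (E : Finset (Fin n → ℝ)) : Polynomial ℤ :=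
  ∑ F ∈ S.faces.filter (fun F => E ⊆ F),
    Polynomial.C ((-1 : ℤ) ^ (n - F.card)) *
      Polynomial.X ^ ((n - E.card) - excess F) * (Polynomial.X - 1) ^ (excess F)

/-- `W(E′) = {v ∈ V ∖ E′ : {v} ∪ E′ ∈ 𝒮}`, the vertices of the link of `E′`. -/
def fanW {n : ℕ} (S : SimplicialFan n) (E' : Finset (Fin n → ℝ)) :
    Finset (Fin n → ℝ) :=
  (S.verts \ E').filter fun v => insert v E' ∈ S.faces

/-- The ideal `I(E′)` in `ℝ[x_v : v ∈ W(E′)]` generated by the non-face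
monomials and by the linear forms `θ_u = Σ_{v ∈ W(E′)} u(v)·x_v` over all linear
functionals `u` vanishing on `span(E′)`. -/
def ringHIdeal {n : ℕ} (S : SimplicialFan n) (E' : Finset (Fin n → ℝ)) :
    Ideal (MvPolynomial {v // v ∈ fanW S E'} ℝ) :=
  Ideal.span
    ({m | ∃ G' : Finset {v // v ∈ fanW S E'},
        (G'.image (fun v => (v : Fin n → ℝ))) ∪ E' ∉ S.faces ∧
        m = ∏ v ∈ G', MvPolynomial.X v} ∪
     {p | ∃ u : (Fin n → ℝ) →ₗ[ℝ] ℝ,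
        (∀ w ∈ Submodule.span ℝ (E' : Set (Fin n → ℝ)), u w = 0) ∧
        p = ∑ v : {v // v ∈ fanW S E'}, MvPolynomial.C (u v) * MvPolynomial.X v})


namespace FanAux

variable {n : ℕ}

lemma mem_suppSet {F : Finset (Fin n → ℝ)} {ℓ : Fin n} :
    ℓ ∈ suppSet F ↔ ∃ v ∈ F, v ℓ ≠ 0 := by
  simp [suppSet]

lemma suppSet_mono {F F' : Finset (Fin n → ℝ)} (h : F ⊆ F') :
    suppSet F ⊆ suppSet F' := by
  intro ℓ hℓ
  rw [mem_suppSet] at hℓ ⊢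
  obtain ⟨v, hv, hv0⟩ := hℓ
  exact ⟨v, h hv, hv0⟩

lemma suppSet_union (F F' : Finset (Fin n → ℝ)) :
    suppSet (F ∪ F') = suppSet F ∪ suppSet F' := by
  ext ℓ
  simp only [mem_suppSet, Finset.mem_union]
  constructor
  · rintro ⟨v, hv | hv, h0⟩
    · exact Or.inl ⟨v, hv, h0⟩
    · exact Or.inr ⟨v, hv, h0⟩
  · rintro (⟨v, hv, h0⟩ | ⟨v, hv, h0⟩)
    · exact ⟨v, Or.inl hv, h0⟩
    · exact ⟨v, Or.inr hv, h0⟩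

lemma image_coe_eq (S : SimplicialFan n) (E' : Finset (Fin n → ℝ))
    (H₀ : Finset {v // v ∈ fanW S E'}) :
    (H₀.image (fun v => (v : Fin n → ℝ))) = H₀.image Subtype.val := by
  ext x
  simp [Finset.pure_def, Finset.bind_def, Finset.sup_singleton_apply, Finset.image_id']

lemma theta_mem (S : SimplicialFan n) (E' : Finset (Fin n → ℝ))
    (u : (Fin n → ℝ) →ₗ[ℝ] ℝ) (h : ∀ w ∈ E', u w = 0) :
    (∑ v : {v // v ∈ fanW S E'}, MvPolynomial.C (u (v : Fin n → ℝ)) * MvPolynomial.X v)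
      ∈ ringHIdeal S E' := by
  apply Ideal.subset_span
  refine Set.mem_union_right _ ⟨u, ?_, rfl⟩
  intro w hw
  have hle : Submodule.span ℝ ((E' : Finset (Fin n → ℝ)) : Set (Fin n → ℝ)) ≤
      LinearMap.ker u :=
    Submodule.span_le.mpr (fun x hx => LinearMap.mem_ker.mpr (h x hx))
  exact hle hw

lemma nonface_mem' (S : SimplicialFan n) (E' : Finset (Fin n → ℝ))
    (H₀ : Finset {v // v ∈ fanW S E'})
    (h : (H₀.image Subtype.val) ∪ E' ∉ S.faces) :
    (∏ v ∈ H₀, MvPolynomial.X v) ∈ ringHIdeal S E' :=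
  Ideal.subset_span (Set.mem_union_left _
    ⟨H₀, by rw [image_coe_eq]; exact h, rfl⟩)

lemma pair_sdiff_card_one {γ : Type*} [DecidableEq γ] {a b : γ} {s : Finset γ}
    (hab : a ≠ b) (h : (({a, b} : Finset γ) \ s).card = 1) :
    ∃ c p : γ, c ∉ s ∧ p ∈ s ∧ ((a = c ∧ b = p) ∨ (a = p ∧ b = c)) := by
  by_cases ha : a ∈ s <;> by_cases hb : b ∈ s
  · exfalso
    have hempty : (({a, b} : Finset γ) \ s) = ∅ := by
      apply Finset.sdiff_eq_empty_iff_subset.mpr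
      intro x hx
      rcases Finset.mem_insert.mp hx with rfl | hx
      · exact ha
      · rw [Finset.mem_singleton.mp hx]
        exact hb
    rw [hempty] at h
    simp at h
  · exact ⟨b, a, hb, ha, Or.inr ⟨rfl, rfl⟩⟩
  · exact ⟨a, b, ha, hb, Or.inl ⟨rfl, rfl⟩⟩
  · exfalso
    have hself : (({a, b} : Finset γ) \ s) = {a, b} := by
      rw [Finset.sdiff_eq_self_iff_disjoint]
      rw [Finset.disjoint_left]
      intro x hx
      rcases Finset.mem_insert.mp hx with rfl | hx
      · exact ha
      · rw [Finset.mem_singleton.mp hx]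
        exact hb
    rw [hself, Finset.card_insert_of_notMem (by simp [hab]),
      Finset.card_singleton] at h
    omega

lemma step_mem {R : Type*} [CommRing R] (I : Ideal R) (m P y θ Q : R)
    (h1 : y + θ ∈ I) (h2 : m * P * θ * Q ∈ I) : m * P * (y * Q) ∈ I := by
  have heq : m * P * (y * Q) = m * P * (y + θ) * Q - m * P * θ * Q := by ring
  rw [heq]
  exact Ideal.sub_mem _
    (Ideal.mul_mem_right _ _ (Ideal.mul_mem_left _ _ h1)) h2

lemma ring3 {R : Type*} [CommRing R] (c m x P Q : R) :
    m * P * (c * x) * Q = c * m * x * P * Q := by ring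

lemma ring4 {R : Type*} [CommRing R] (c m x P Q : R) :
    m * P * (c * x) * Q = c * m * (x * P) * Q := by ring
/-- Every nonempty face `H` of the link of `F ∪ E` yields an apex `A i` of `F`
whose base pair is hit by `σ(H)` in exactly one coordinate (via maximality). -/
lemma exists_unbalanced {r : ℕ} (S : SimplicialFan n)
    (E F : Finset (Fin n → ℝ)) (hF : F ∈ link S E)
    (hint : IsInteriorFace (F ∪ E))
    (hmax : ∀ F' ∈ link S E, F ⊂ F' → IsUPyramid E F')
    (A : Fin r → (Fin n → ℝ))
    (hApexAll : ∀ B ∈ apices E F, ∃ i, B = A i)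
    (H : Finset (Fin n → ℝ)) (hH1 : H ∩ (F ∪ E) = ∅)
    (hH2 : H ∪ (F ∪ E) ∈ S.faces) (hHne : H.Nonempty) :
    ∃ i : Fin r, (baseDirs E F (A i) \ suppSet H).card = 1 := by
  have hintU : suppSet (F ∪ E) = Finset.univ := hint
  have hFmem := Finset.mem_filter.mp hF
  have hFE : F ∩ E = ∅ := hFmem.2.1
  have hHFE : ∀ x ∈ H, x ∉ F ∪ E := by
    intro x hx hx'
    have hmem : x ∈ H ∩ (F ∪ E) := Finset.mem_inter.mpr ⟨hx, hx'⟩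
    rw [hH1] at hmem
    exact absurd hmem (Finset.notMem_empty x)
  have hunion_faces : F ∪ H ∪ E ∈ S.faces := by
    refine S.down_closed _ hH2 _ ?_
    intro x hx
    simp only [Finset.mem_union] at hx ⊢
    tauto
  have hFH_link : F ∪ H ∈ link S E := by
    rw [link, Finset.mem_filter]
    refine ⟨S.down_closed _ hunion_faces _ Finset.subset_union_left, ?_, hunion_faces⟩
    ext x
    simp only [Finset.mem_inter, Finset.mem_union, Finset.notMem_empty, iff_false, not_and]
    rintro (hx1 | hx1) hx2
    · have : x ∈ F ∩ E := Finset.mem_inter.mpr ⟨hx1, hx2⟩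
      rw [hFE] at this
      exact absurd this (Finset.notMem_empty x)
    · exact hHFE x hx1 (Finset.mem_union_right _ hx2)
  obtain ⟨w, hwH⟩ := hHne
  have hssub : F ⊂ F ∪ H := by
    refine (Finset.ssubset_iff_of_subset Finset.subset_union_left).mpr ?_
    exact ⟨w, Finset.mem_union_right _ hwH,
      fun hwF => hHFE w hwH (Finset.mem_union_left _ hwF)⟩
  obtain ⟨B, hBap, hBcard⟩ := hmax _ hFH_link hssub
  rw [apices, Finset.mem_filter] at hBap
  obtain ⟨hBmem, hBm2, hB2, hB3⟩ := hBap
  have hBF : B ∈ F := by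
    by_contra hBF
    have hBH : B ∈ H := by
      rcases Finset.mem_union.mp hBmem with h | h
      · exact absurd h hBF
      · exact h
    apply hB3
    have hsub : F ∪ E ⊆ (F ∪ H ∪ E).erase B := by
      intro x hx
      refine Finset.mem_erase.mpr ⟨?_, ?_⟩
      · intro hxB
        exact hHFE x (by rw [hxB]; exact hBH) hx
      · rcases Finset.mem_union.mp hx with h | h
        · exact Finset.mem_union_left _ (Finset.mem_union_left _ h)
        · exact Finset.mem_union_right _ h
    have hmono := suppSet_mono hsub
    rw [hintU] at hmono
    exact Finset.Subset.antisymm (Finset.subset_univ _) hmono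
  have hBapF : B ∈ apices E F := by
    rw [apices, Finset.mem_filter]
    refine ⟨hBF, hBF, hint, fun hcon => hB3 ?_⟩
    have hsub : (F ∪ E).erase B ⊆ (F ∪ H ∪ E).erase B := by
      apply Finset.erase_subset_erase
      intro x hx
      rcases Finset.mem_union.mp hx with h | h
      · exact Finset.mem_union_left _ (Finset.mem_union_left _ h)
      · exact Finset.mem_union_right _ h
    have hmono := suppSet_mono hsub
    have hconU : suppSet ((F ∪ E).erase B) = Finset.univ := hcon
    rw [hconU] at hmono
    exact Finset.Subset.antisymm (Finset.subset_univ _) hmono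
  obtain ⟨i, hBi⟩ := hApexAll B hBapF
  subst hBi
  have hAiH : A i ∉ H := fun h => hHFE _ h (Finset.mem_union_left _ hBF)
  have herase : (F ∪ H ∪ E).erase (A i) = ((F ∪ E).erase (A i)) ∪ H := by
    ext x
    simp only [Finset.mem_erase, Finset.mem_union]
    constructor
    · rintro ⟨hne, (h | h) | h⟩
      · exact Or.inl ⟨hne, Or.inl h⟩
      · exact Or.inr h
      · exact Or.inl ⟨hne, Or.inr h⟩
    · rintro (⟨hne, h | h⟩ | h)
      · exact ⟨hne, Or.inl (Or.inl h)⟩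
      · exact ⟨hne, Or.inr h⟩
      · exact ⟨fun hx => hAiH (hx ▸ h), Or.inl (Or.inr h)⟩
  have hbd : baseDirs E (F ∪ H) (A i) = (baseDirs E F (A i)) \ suppSet H := by
    rw [baseDirs, baseDirs, herase, suppSet_union]
    ext ℓ
    simp only [Finset.mem_sdiff, Finset.mem_univ, true_and, Finset.mem_union]
    tauto
  rw [hbd] at hBcard
  exact ⟨i, hBcard⟩


set_option maxHeartbeats 1000000 in
/-- Main induction: the product of a face monomial covering all base pairs
outside `T'` with the linear forms indexed by `T'` lies in `I(F ∪ E)`. -/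
lemma main_induction {r : ℕ} (S : SimplicialFan n) (hrn : 2 * r ≤ n)
    (E F : Finset (Fin n → ℝ)) (hF : F ∈ link S E)
    (hint : IsInteriorFace (F ∪ E))
    (hmax : ∀ F' ∈ link S E, F ⊂ F' → IsUPyramid E F')
    (A : Fin r → (Fin n → ℝ))
    (hApexAll : ∀ B ∈ apices E F, ∃ i, B = A i)
    (hbase : ∀ i : Fin r, baseDirs E F (A i) =
      {(⟨2 * (i : ℕ), (by have := i.isLt; omega : 2 * (i : ℕ) + 0 < n)⟩ : Fin n),
       (⟨2 * (i : ℕ) + 1, (by have := i.isLt; omega : 2 * (i : ℕ) + 1 + 0 < n)⟩ : Fin n)})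
    (hAcoord : ∀ i : Fin r,
      A i (⟨2 * (i : ℕ), (by have := i.isLt; omega : 2 * (i : ℕ) + 0 < n)⟩ : Fin n) = 1 ∧
      A i (⟨2 * (i : ℕ) + 1, (by have := i.isLt; omega : 2 * (i : ℕ) + 1 + 0 < n)⟩ : Fin n) = 1)
    (Sset : Finset (Fin r))
    (u : Fin r → ((Fin n → ℝ) →ₗ[ℝ] ℝ))
    (hu : ∀ j ∉ Sset, u j (A j) = 1 ∧ ∀ w ∈ F ∪ E, w ≠ A j → u j w = 0) :
    ∀ k : ℕ, ∀ T' : Finset (Fin r), T'.card = k → (∀ j ∈ T', j ∉ Sset) →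
    ∀ H₀ : Finset {v // v ∈ fanW S (F ∪ E)}, H₀.Nonempty →
    (∀ i : Fin r, i ∉ T' →
      (⟨2 * (i : ℕ), (by have := i.isLt; omega : 2 * (i : ℕ) + 0 < n)⟩ : Fin n) ∈
        suppSet (H₀.image Subtype.val) ∧
      (⟨2 * (i : ℕ) + 1, (by have := i.isLt; omega : 2 * (i : ℕ) + 1 + 0 < n)⟩ : Fin n) ∈
        suppSet (H₀.image Subtype.val)) →
    ∀ m : MvPolynomial {v // v ∈ fanW S (F ∪ E)} ℝ,
      m * (∏ v ∈ H₀, MvPolynomial.X v) *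
        ∏ j ∈ T', (- ∑ v : {v // v ∈ fanW S (F ∪ E)},
          MvPolynomial.C (u j (v : Fin n → ℝ)) * MvPolynomial.X v)
        ∈ ringHIdeal S (F ∪ E) := by
  intro k
  induction k with
  | zero =>
    intro T' hTcard hTS H₀ hH₀ne hcov m
    by_cases hface : (H₀.image Subtype.val) ∪ (F ∪ E) ∈ S.faces
    · exfalso
      have hT' : T' = ∅ := Finset.card_eq_zero.mp hTcard
      have hH1 : (H₀.image Subtype.val) ∩ (F ∪ E) = ∅ := by
        apply Finset.eq_empty_of_forall_notMem
        intro x hx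
        rw [Finset.mem_inter, Finset.mem_image] at hx
        obtain ⟨⟨w, hw, rfl⟩, hx2⟩ := hx
        have hw2 := w.2
        unfold fanW at hw2
        rw [Finset.mem_filter, Finset.mem_sdiff] at hw2
        exact hw2.1.2 hx2
      obtain ⟨i, hcard1⟩ := exists_unbalanced S E F hF hint hmax A hApexAll
        (H₀.image Subtype.val) hH1 hface (hH₀ne.image _)
      rw [hbase i] at hcard1
      have hab : (⟨2 * (i : ℕ), (by have := i.isLt; omega : 2 * (i : ℕ) + 0 < n)⟩ : Fin n) ≠
          (⟨2 * (i : ℕ) + 1, (by have := i.isLt; omega : 2 * (i : ℕ) + 1 + 0 < n)⟩ : Fin n) := by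
        intro h
        rw [Fin.mk.injEq] at h
        omega
      obtain ⟨c, p, hcnot, hpin, hcp⟩ := pair_sdiff_card_one hab hcard1
      obtain ⟨hc1, hc2⟩ := hcov i (by rw [hT']; exact Finset.notMem_empty i)
      rcases hcp with ⟨hac, hbp⟩ | ⟨hap, hbc⟩
      · exact hcnot (hac ▸ hc1)
      · exact hcnot (hbc ▸ hc2)
    · exact Ideal.mul_mem_right _ _
        (Ideal.mul_mem_left _ _ (nonface_mem' S (F ∪ E) H₀ hface))
  | succ k ih =>
    intro T' hTcard hTS H₀ hH₀ne hcov m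
    by_cases hface : (H₀.image Subtype.val) ∪ (F ∪ E) ∈ S.faces
    · have hH1 : (H₀.image Subtype.val) ∩ (F ∪ E) = ∅ := by
        apply Finset.eq_empty_of_forall_notMem
        intro x hx
        rw [Finset.mem_inter, Finset.mem_image] at hx
        obtain ⟨⟨w, hw, rfl⟩, hx2⟩ := hx
        have hw2 := w.2
        unfold fanW at hw2
        rw [Finset.mem_filter, Finset.mem_sdiff] at hw2
        exact hw2.1.2 hx2
      obtain ⟨i, hcard1⟩ := exists_unbalanced S E F hF hint hmax A hApexAll
        (H₀.image Subtype.val) hH1 hface (hH₀ne.image _)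
      rw [hbase i] at hcard1
      have hab : (⟨2 * (i : ℕ), (by have := i.isLt; omega : 2 * (i : ℕ) + 0 < n)⟩ : Fin n) ≠
          (⟨2 * (i : ℕ) + 1, (by have := i.isLt; omega : 2 * (i : ℕ) + 1 + 0 < n)⟩ : Fin n) := by
        intro h
        rw [Fin.mk.injEq] at h
        omega
      obtain ⟨c, p, hcnot, hpin, hcp⟩ := pair_sdiff_card_one hab hcard1
      -- facts about the missing coordinate c and present coordinate p
      have hAc : A i c = 1 := by
        rcases hcp with ⟨hac, _⟩ | ⟨_, hbc⟩
        · exact hac ▸ (hAcoord i).1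
        · exact hbc ▸ (hAcoord i).2
      have hcbase : c ∈ baseDirs E F (A i) := by
        rw [hbase i]
        rcases hcp with ⟨hac, _⟩ | ⟨_, hbc⟩
        · exact hac ▸ Finset.mem_insert_self _ _
        · exact hbc ▸ Finset.mem_insert_of_mem (Finset.mem_singleton_self _)
      have hpairmem : ∀ s' : Finset (Fin n), c ∈ s' → p ∈ s' →
          ((⟨2 * (i : ℕ), (by have := i.isLt; omega : 2 * (i : ℕ) + 0 < n)⟩ : Fin n) ∈ s' ∧
           (⟨2 * (i : ℕ) + 1, (by have := i.isLt; omega : 2 * (i : ℕ) + 1 + 0 < n)⟩ : Fin n) ∈ s') := by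
        intro s' hcs hps
        rcases hcp with ⟨hac, hbp⟩ | ⟨hap, hbc⟩
        · exact ⟨hac ▸ hcs, hbp ▸ hps⟩
        · exact ⟨hap ▸ hps, hbc ▸ hcs⟩
      have hpairnot : ¬ ((⟨2 * (i : ℕ), (by have := i.isLt; omega : 2 * (i : ℕ) + 0 < n)⟩ : Fin n) ∈
            suppSet (H₀.image Subtype.val) ∧
          (⟨2 * (i : ℕ) + 1, (by have := i.isLt; omega : 2 * (i : ℕ) + 1 + 0 < n)⟩ : Fin n) ∈
            suppSet (H₀.image Subtype.val)) := by
        rintro ⟨h1, h2⟩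
        rcases hcp with ⟨hac, _⟩ | ⟨_, hbc⟩
        · exact hcnot (hac ▸ h1)
        · exact hcnot (hbc ▸ h2)
      have hiT' : i ∈ T' := by
        by_contra hiT'
        exact hpairnot (hcov i hiT')
      have hiS : i ∉ Sset := hTS i hiT'
      have hwc : ∀ w ∈ F ∪ E, w ≠ A i → w c = 0 := by
        intro w hw hwA
        rw [baseDirs, Finset.mem_sdiff] at hcbase
        by_contra hwc0
        exact hcbase.2 (mem_suppSet.mpr ⟨w, Finset.mem_erase.mpr ⟨hwA, hw⟩, hwc0⟩)
      -- the relation y_i + θ_c ∈ I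
      have hvan : ∀ w ∈ F ∪ E,
          ((LinearMap.proj c : (Fin n → ℝ) →ₗ[ℝ] ℝ) - u i) w = 0 := by
        intro w hw
        rw [LinearMap.sub_apply, LinearMap.proj_apply]
        by_cases hwA : w = A i
        · subst hwA
          rw [hAc, (hu i hiS).1, sub_self]
        · rw [hwc w hw hwA, (hu i hiS).2 w hw hwA, sub_zero]
      have hθI := theta_mem S (F ∪ E) (LinearMap.proj c - u i) hvan
      have hsum_eq : (∑ v : {v // v ∈ fanW S (F ∪ E)},
            MvPolynomial.C (((LinearMap.proj c : (Fin n → ℝ) →ₗ[ℝ] ℝ) - u i)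
              (v : Fin n → ℝ)) * MvPolynomial.X v) =
          (∑ v : {v // v ∈ fanW S (F ∪ E)},
            MvPolynomial.C ((v : Fin n → ℝ) c) * MvPolynomial.X v) -
          ∑ v : {v // v ∈ fanW S (F ∪ E)},
            MvPolynomial.C (u i (v : Fin n → ℝ)) * MvPolynomial.X v := by
        rw [← Finset.sum_sub_distrib]
        apply Finset.sum_congr rfl
        intro v _
        rw [LinearMap.sub_apply, LinearMap.proj_apply, map_sub, sub_mul]
      have hyθ : (- ∑ v : {v // v ∈ fanW S (F ∪ E)},
            MvPolynomial.C (u i (v : Fin n → ℝ)) * MvPolynomial.X v) +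
          (∑ v : {v // v ∈ fanW S (F ∪ E)},
            MvPolynomial.C ((v : Fin n → ℝ) c) * MvPolynomial.X v)
          ∈ ringHIdeal S (F ∪ E) := by
        rw [neg_add_eq_sub, ← hsum_eq]
        exact hθI
      -- split off the i-th factor
      rw [← Finset.mul_prod_erase _ _ hiT']
      refine step_mem _ _ _ _
        (∑ v : {v // v ∈ fanW S (F ∪ E)},
          MvPolynomial.C ((v : Fin n → ℝ) c) * MvPolynomial.X v) _ hyθ ?_
      -- expand θ_c and treat each vertex separately
      have hexp : m * (∏ v ∈ H₀, MvPolynomial.X v) *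
          (∑ v : {v // v ∈ fanW S (F ∪ E)},
            MvPolynomial.C ((v : Fin n → ℝ) c) * MvPolynomial.X v) *
          (∏ j ∈ T'.erase i, (- ∑ v : {v // v ∈ fanW S (F ∪ E)},
            MvPolynomial.C (u j (v : Fin n → ℝ)) * MvPolynomial.X v)) =
          ∑ v : {v // v ∈ fanW S (F ∪ E)},
            m * (∏ w ∈ H₀, MvPolynomial.X w) *
              (MvPolynomial.C ((v : Fin n → ℝ) c) * MvPolynomial.X v) *
              (∏ j ∈ T'.erase i, (- ∑ w : {v // v ∈ fanW S (F ∪ E)},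
                MvPolynomial.C (u j (w : Fin n → ℝ)) * MvPolynomial.X w)) := by
        rw [Finset.mul_sum, Finset.sum_mul]
      rw [hexp]
      apply Ideal.sum_mem
      intro v _
      by_cases hvc : (v : Fin n → ℝ) c = 0
      · rw [hvc]
        simp only [map_zero, zero_mul, mul_zero]
        exact Ideal.zero_mem _
      -- data for the inductive hypothesis
      have hTcard' : (T'.erase i).card = k := by
        have := Finset.card_erase_of_mem hiT'
        omega
      have hTS' : ∀ j ∈ T'.erase i, j ∉ Sset :=
        fun j hj => hTS j (Finset.mem_of_mem_erase hj)
      have hne' : (insert v H₀).Nonempty := Finset.insert_nonempty v H₀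
      have hcov' : ∀ i' : Fin r, i' ∉ T'.erase i →
          (⟨2 * (i' : ℕ), (by have := i'.isLt; omega : 2 * (i' : ℕ) + 0 < n)⟩ : Fin n) ∈
            suppSet ((insert v H₀).image Subtype.val) ∧
          (⟨2 * (i' : ℕ) + 1, (by have := i'.isLt; omega : 2 * (i' : ℕ) + 1 + 0 < n)⟩ : Fin n) ∈
            suppSet ((insert v H₀).image Subtype.val) := by
        intro i' hi'
        rw [Finset.image_insert]
        by_cases hi'T : i' ∈ T'
        · have hii' : i' = i := by
            by_contra hne
            exact hi' (Finset.mem_erase.mpr ⟨hne, hi'T⟩)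
          subst hii'
          have hcin : c ∈ suppSet (insert (v : Fin n → ℝ) (H₀.image Subtype.val)) :=
            mem_suppSet.mpr ⟨(v : Fin n → ℝ), Finset.mem_insert_self _ _, hvc⟩
          have hpin' : p ∈ suppSet (insert (v : Fin n → ℝ) (H₀.image Subtype.val)) :=
            suppSet_mono (Finset.subset_insert _ _) hpin
          exact hpairmem _ hcin hpin'
        · obtain ⟨hpa, hpb⟩ := hcov i' hi'T
          exact ⟨suppSet_mono (Finset.subset_insert _ _) hpa,
            suppSet_mono (Finset.subset_insert _ _) hpb⟩
      by_cases hvH : v ∈ H₀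
      · have h := ih (T'.erase i) hTcard' hTS' (insert v H₀) hne' hcov'
          (MvPolynomial.C ((v : Fin n → ℝ) c) * m * MvPolynomial.X v)
        rw [Finset.insert_eq_self.mpr hvH] at h
        rw [ring3]
        exact h
      · have h := ih (T'.erase i) hTcard' hTS' (insert v H₀) hne' hcov'
          (MvPolynomial.C ((v : Fin n → ℝ) c) * m)
        rw [Finset.prod_insert hvH] at h
        rw [ring4]
        exact h
    · exact Ideal.mul_mem_right _ _
        (Ideal.mul_mem_left _ _ (nonface_mem' S (F ∪ E) H₀ hface))


end FanAux

set_option maxHeartbeats 1000000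

/-- Vanishing of the mixed monomial-linear-form products in the ring
`H(F ∪ E)` for a maximal non-U-pyramid with apices `A₁,…,A_r` of base pairs
`V_{A_i} = {2i−1, 2i}`. -/
theorem mixed_product_eq_zero_in_H {n r : ℕ} (S : SimplicialFan n)
    (hrn : 2 * r ≤ n)
    (E : Finset (Fin n → ℝ)) (hE : E ∈ S.faces)
    (F : Finset (Fin n → ℝ)) (hF : F ∈ link S E)
    (hint : IsInteriorFace (F ∪ E))
    (hnotU : ¬ IsUPyramid E F)
    (hmax : ∀ F' ∈ link S E, F ⊂ F' → IsUPyramid E F')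
    (A : Fin r → (Fin n → ℝ)) (hAinj : Function.Injective A)
    (hApex : ∀ i, A i ∈ apices E F)
    (hApexAll : ∀ B ∈ apices E F, ∃ i, B = A i)
    (hbase : ∀ i : Fin r, baseDirs E F (A i) =
      {(⟨2 * (i : ℕ), by have := i.isLt; omega⟩ : Fin n),
       (⟨2 * (i : ℕ) + 1, by have := i.isLt; omega⟩ : Fin n)})
    (hAcoord : ∀ i : Fin r,
      A i (⟨2 * (i : ℕ), by have := i.isLt; omega⟩ : Fin n) = 1 ∧
      A i (⟨2 * (i : ℕ) + 1, by have := i.isLt; omega⟩ : Fin n) = 1)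
    (Sset : Finset (Fin r)) (hSset : Sset.Nonempty)
    (G : Finset (Fin n → ℝ)) (hG : G ∈ link S (F ∪ E))
    (hGsupp : ∀ j ∈ Sset,
      (⟨2 * (j : ℕ), by have := j.isLt; omega⟩ : Fin n) ∈ suppSet G ∧
      (⟨2 * (j : ℕ) + 1, by have := j.isLt; omega⟩ : Fin n) ∈ suppSet G)
    (u : Fin r → ((Fin n → ℝ) →ₗ[ℝ] ℝ))
    (hu : ∀ j ∉ Sset, u j (A j) = 1 ∧ ∀ w ∈ F ∪ E, w ≠ A j → u j w = 0) :
    Ideal.Quotient.mk (ringHIdeal S (F ∪ E))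
      ((∏ v ∈ Finset.univ.filter
          (fun v : {v // v ∈ fanW S (F ∪ E)} => (v : Fin n → ℝ) ∈ G),
          MvPolynomial.X v) *
        ∏ j ∈ Finset.univ \ Sset,
          (- ∑ v : {v // v ∈ fanW S (F ∪ E)},
            MvPolynomial.C (u j (v : Fin n → ℝ)) * MvPolynomial.X v)) = 0 := by
  rw [Ideal.Quotient.eq_zero_iff_mem]
  have hGmem := Finset.mem_filter.mp hG
  have hGf : G ∈ S.faces := hGmem.1
  have hGdisj : G ∩ (F ∪ E) = ∅ := hGmem.2.1
  have hGun : G ∪ (F ∪ E) ∈ S.faces := hGmem.2.2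
  have hGW : ∀ v ∈ G, v ∈ fanW S (F ∪ E) := by
    intro v hv
    unfold fanW
    rw [Finset.mem_filter, Finset.mem_sdiff]
    refine ⟨⟨S.faces_subset_verts G hGf hv, ?_⟩, ?_⟩
    · intro hvFE
      have hmem : v ∈ G ∩ (F ∪ E) := Finset.mem_inter.mpr ⟨hv, hvFE⟩
      rw [hGdisj] at hmem
      exact absurd hmem (Finset.notMem_empty v)
    · exact S.down_closed _ hGun _
        (Finset.insert_subset (Finset.mem_union_left _ hv) Finset.subset_union_right)
  have himg : (Finset.univ.filter
      (fun v : {v // v ∈ fanW S (F ∪ E)} => (v : Fin n → ℝ) ∈ G)).image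
      Subtype.val = G := by
    ext x
    simp only [Finset.mem_image, Finset.mem_filter, Finset.mem_univ, true_and]
    constructor
    · rintro ⟨w, hw, rfl⟩
      exact hw
    · intro hx
      exact ⟨⟨x, hGW x hx⟩, hx, rfl⟩
  have hne : (Finset.univ.filter
      (fun v : {v // v ∈ fanW S (F ∪ E)} => (v : Fin n → ℝ) ∈ G)).Nonempty := by
    obtain ⟨j, hj⟩ := hSset
    obtain ⟨v, hvG, hv0⟩ := FanAux.mem_suppSet.mp (hGsupp j hj).1
    exact ⟨⟨v, hGW v hvG⟩, Finset.mem_filter.mpr ⟨Finset.mem_univ _, hvG⟩⟩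
  have hcov : ∀ i : Fin r, i ∉ Finset.univ \ Sset →
      (⟨2 * (i : ℕ), by have := i.isLt; omega⟩ : Fin n) ∈
        suppSet ((Finset.univ.filter
          (fun v : {v // v ∈ fanW S (F ∪ E)} => (v : Fin n → ℝ) ∈ G)).image
          Subtype.val) ∧
      (⟨2 * (i : ℕ) + 1, by have := i.isLt; omega⟩ : Fin n) ∈
        suppSet ((Finset.univ.filter
          (fun v : {v // v ∈ fanW S (F ∪ E)} => (v : Fin n → ℝ) ∈ G)).image
          Subtype.val) := by
    intro i hi
    rw [himg]
    have hiS : i ∈ Sset := by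
      by_contra h
      exact hi (Finset.mem_sdiff.mpr ⟨Finset.mem_univ i, h⟩)
    exact hGsupp i hiS
  have hmain := FanAux.main_induction S hrn E F hF hint hmax A hApexAll hbase hAcoord
    Sset u hu (Finset.univ \ Sset).card (Finset.univ \ Sset) rfl
    (fun j hj => (Finset.mem_sdiff.mp hj).2) _ hne hcov 1
  rw [one_mul] at hmain
  exact hmain

end
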